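/- Let Ω ⊂ ℝⁿ be measurable, let γ_e, γ_s ∈ L¹(ℝⁿ) be even kernels, set γ := γ_e + γ_s and Γ_s := ∫_{ℝⁿ} γ_s. Let B_e and B denote the nonlocal bilinear forms with kernels γ_e and γ respectively. Suppose β > 0 is such that B_e[u,u] ≥ β‖u‖²_{L²(Ω)} for every u ∈ L²(ℝⁿ) vanishing almost everywhere outside Ω, and suppose ‖γ_s‖_{L¹(ℝⁿ)} − Γ_s < β. Then for every such u, B[u,u] ≥ (β + Γ_s − ‖γ_s‖_{L¹(ℝⁿ)}) ‖u‖²_{L²(Ω)}. -/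

import Mathlib

open MeasureTheory

/-- The nonlocal bilinear form
`B[u,v] = (1/2) ∬ (u(y)-u(x)) γ(x-y) (v(y)-v(x)) dy dx`. -/
noncomputable def nonlocalForm (n : ℕ) (γ u v : EuclideanSpace ℝ (Fin n) → ℝ) : ℝ :=
  (1/2) * ∫ x, ∫ y, (u y - u x) * γ (x - y) * (v y - v x)

namespace NonlocalAux

variable {n : ℕ}

/-- The measurable equivalence `(x, y) ↦ (x, x - y)` (an involution). -/
noncomputable def φ (n : ℕ) : (EuclideanSpace ℝ (Fin n) × EuclideanSpace ℝ (Fin n)) ≃ᵐ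
    (EuclideanSpace ℝ (Fin n) × EuclideanSpace ℝ (Fin n)) where
  toFun p := (p.1, p.1 - p.2)
  invFun p := (p.1, p.1 - p.2)
  left_inv p := by simp
  right_inv p := by simp
  measurable_toFun := measurable_fst.prodMk (measurable_fst.sub measurable_snd)
  measurable_invFun := measurable_fst.prodMk (measurable_fst.sub measurable_snd)

/-- The measurable equivalence `(x, y) ↦ (y, x - y)`. -/
noncomputable def ψ (n : ℕ) : (EuclideanSpace ℝ (Fin n) × EuclideanSpace ℝ (Fin n)) ≃ᵐ
    (EuclideanSpace ℝ (Fin n) × EuclideanSpace ℝ (Fin n)) where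
  toFun p := (p.2, p.1 - p.2)
  invFun p := (p.1 + p.2, p.1)
  left_inv p := by simp
  right_inv p := by simp
  measurable_toFun := measurable_snd.prodMk (measurable_fst.sub measurable_snd)
  measurable_invFun := (measurable_fst.add measurable_snd).prodMk measurable_fst

lemma hφ : MeasurePreserving (φ n) (volume.prod volume) (volume.prod volume) := by
  have h1 := measurePreserving_prod_sub (volume : Measure (EuclideanSpace ℝ (Fin n))) volume
  have h2 : MeasurePreserving
      (Prod.map (id : EuclideanSpace ℝ (Fin n) → _) (Neg.neg : EuclideanSpace ℝ (Fin n) → _))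
      (volume.prod volume) (volume.prod volume) :=
    (MeasurePreserving.id volume).prod (Measure.measurePreserving_neg volume)
  have h3 := h2.comp h1
  have : (Prod.map (id : EuclideanSpace ℝ (Fin n) → _) (Neg.neg : EuclideanSpace ℝ (Fin n) → _)
      ∘ fun z : EuclideanSpace ℝ (Fin n) × EuclideanSpace ℝ (Fin n) => (z.1, z.2 - z.1))
      = ⇑(φ n) := by
    funext p
    simp [φ, Prod.map, neg_sub]
  rwa [this] at h3

lemma hψ : MeasurePreserving (ψ n) (volume.prod volume) (volume.prod volume) :=
  measurePreserving_prod_sub_swap volume volume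

variable {k u : EuclideanSpace ℝ (Fin n) → ℝ}

lemma int1 (hk : Integrable k) (hu2 : Integrable (fun x => u x ^ 2)) :
    Integrable (fun p : EuclideanSpace ℝ (Fin n) × EuclideanSpace ℝ (Fin n) =>
      u p.1 ^ 2 * k (p.1 - p.2)) (volume.prod volume) := by
  have hG : Integrable (fun q : EuclideanSpace ℝ (Fin n) × EuclideanSpace ℝ (Fin n) =>
      u q.1 ^ 2 * k q.2) (volume.prod volume) := hu2.mul_prod hk
  exact (hφ.integrable_comp hG.aestronglyMeasurable).mpr hG

lemma int2 (hk : Integrable k) (hu2 : Integrable (fun x => u x ^ 2)) :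
    Integrable (fun p : EuclideanSpace ℝ (Fin n) × EuclideanSpace ℝ (Fin n) =>
      u p.2 ^ 2 * k (p.1 - p.2)) (volume.prod volume) := by
  have hG : Integrable (fun q : EuclideanSpace ℝ (Fin n) × EuclideanSpace ℝ (Fin n) =>
      u q.1 ^ 2 * k q.2) (volume.prod volume) := hu2.mul_prod hk
  exact (hψ.integrable_comp hG.aestronglyMeasurable).mpr hG

lemma eval1 (hk : Integrable k) (hu2 : Integrable (fun x => u x ^ 2)) :
    ∫ p : EuclideanSpace ℝ (Fin n) × EuclideanSpace ℝ (Fin n),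
      u p.1 ^ 2 * k (p.1 - p.2) ∂(volume.prod volume) = (∫ x, u x ^ 2) * ∫ z, k z := by
  have := hφ.integral_comp' (f := φ n)
    (fun q : EuclideanSpace ℝ (Fin n) × EuclideanSpace ℝ (Fin n) => u q.1 ^ 2 * k q.2)
  calc ∫ p : EuclideanSpace ℝ (Fin n) × EuclideanSpace ℝ (Fin n),
      u p.1 ^ 2 * k (p.1 - p.2) ∂(volume.prod volume)
      = ∫ q : EuclideanSpace ℝ (Fin n) × EuclideanSpace ℝ (Fin n),
        u q.1 ^ 2 * k q.2 ∂(volume.prod volume) := this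
    _ = (∫ x, u x ^ 2) * ∫ z, k z := integral_prod_mul (fun x => u x ^ 2) k

lemma eval2 (hk : Integrable k) (hu2 : Integrable (fun x => u x ^ 2)) :
    ∫ p : EuclideanSpace ℝ (Fin n) × EuclideanSpace ℝ (Fin n),
      u p.2 ^ 2 * k (p.1 - p.2) ∂(volume.prod volume) = (∫ x, u x ^ 2) * ∫ z, k z := by
  have := hψ.integral_comp' (f := ψ n)
    (fun q : EuclideanSpace ℝ (Fin n) × EuclideanSpace ℝ (Fin n) => u q.1 ^ 2 * k q.2)
  calc ∫ p : EuclideanSpace ℝ (Fin n) × EuclideanSpace ℝ (Fin n),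
      u p.2 ^ 2 * k (p.1 - p.2) ∂(volume.prod volume)
      = ∫ q : EuclideanSpace ℝ (Fin n) × EuclideanSpace ℝ (Fin n),
        u q.1 ^ 2 * k q.2 ∂(volume.prod volume) := this
    _ = (∫ x, u x ^ 2) * ∫ z, k z := integral_prod_mul (fun x => u x ^ 2) k

lemma int_diff (hk : Integrable k) (hu : AEStronglyMeasurable u volume)
    (hu2 : Integrable (fun x => u x ^ 2)) :
    Integrable (fun p : EuclideanSpace ℝ (Fin n) × EuclideanSpace ℝ (Fin n) =>
      (u p.2 - u p.1) ^ 2 * k (p.1 - p.2)) (volume.prod volume) := by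
  have hK : Integrable (fun z => 2 * |k z|)
      (volume : Measure (EuclideanSpace ℝ (Fin n))) := hk.abs.const_mul 2
  have hdom := (int1 hK hu2).add (int2 hK hu2)
  have hmeas : AEStronglyMeasurable (fun p : EuclideanSpace ℝ (Fin n) × EuclideanSpace ℝ (Fin n) =>
      (u p.2 - u p.1) ^ 2 * k (p.1 - p.2)) (volume.prod volume) := by
    refine AEStronglyMeasurable.mul ?_ ?_
    · exact (hu.comp_snd.sub hu.comp_fst).pow 2
    · exact hk.aestronglyMeasurable.comp_quasiMeasurePreserving
        (quasiMeasurePreserving_sub volume volume)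
  refine hdom.mono' hmeas ?_
  filter_upwards with p
  have h1 : |k (p.1 - p.2)| ≥ 0 := abs_nonneg _
  have h2 : (u p.2 - u p.1) ^ 2 ≤ 2 * (u p.1 ^ 2) + 2 * (u p.2 ^ 2) := by nlinarith [sq_nonneg (u p.1 + u p.2)]
  have h3 : ‖(u p.2 - u p.1) ^ 2 * k (p.1 - p.2)‖ = (u p.2 - u p.1) ^ 2 * |k (p.1 - p.2)| := by
    rw [Real.norm_eq_abs, abs_mul, abs_of_nonneg (sq_nonneg _)]
  rw [h3]
  have : (u p.2 - u p.1) ^ 2 * |k (p.1 - p.2)| ≤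
      (2 * (u p.1 ^ 2) + 2 * (u p.2 ^ 2)) * |k (p.1 - p.2)| := by
    exact mul_le_mul_of_nonneg_right h2 h1
  calc (u p.2 - u p.1) ^ 2 * |k (p.1 - p.2)|
      ≤ (2 * (u p.1 ^ 2) + 2 * (u p.2 ^ 2)) * |k (p.1 - p.2)| := this
    _ = u p.1 ^ 2 * (2 * |k (p.1 - p.2)|) + u p.2 ^ 2 * (2 * |k (p.1 - p.2)|) := by ring

lemma diff_ge (hk : Integrable k) (hu : AEStronglyMeasurable u volume)
    (hu2 : Integrable (fun x => u x ^ 2)) :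
    2 * ((∫ z, k z) - ∫ z, |k z|) * (∫ x, u x ^ 2) ≤
      ∫ p : EuclideanSpace ℝ (Fin n) × EuclideanSpace ℝ (Fin n),
        (u p.2 - u p.1) ^ 2 * k (p.1 - p.2) ∂(volume.prod volume) := by
  set m : EuclideanSpace ℝ (Fin n) → ℝ := fun z => k z - |k z| with hm_def
  have hm : Integrable m (volume : Measure (EuclideanSpace ℝ (Fin n))) := hk.sub hk.abs
  have hI1 := int1 hm hu2
  have hI2 := int2 hm hu2
  have hlow : ∀ p : EuclideanSpace ℝ (Fin n) × EuclideanSpace ℝ (Fin n),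
      u p.1 ^ 2 * m (p.1 - p.2) + u p.2 ^ 2 * m (p.1 - p.2)
        ≤ (u p.2 - u p.1) ^ 2 * k (p.1 - p.2) := by
    intro p
    have h2 : (u p.2 - u p.1) ^ 2 ≤ 2 * (u p.1 ^ 2) + 2 * (u p.2 ^ 2) := by
      nlinarith [sq_nonneg (u p.1 + u p.2)]
    rcases abs_cases (k (p.1 - p.2)) with ⟨h1, h2'⟩ | ⟨h1, h2'⟩ <;>
      simp only [hm_def, h1] <;> nlinarith [sq_nonneg (u p.2 - u p.1)]
  have hmono := integral_mono (hI1.add hI2) (int_diff hk hu hu2) hlow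
  have hadd : ∫ p : EuclideanSpace ℝ (Fin n) × EuclideanSpace ℝ (Fin n),
      (u p.1 ^ 2 * m (p.1 - p.2) + u p.2 ^ 2 * m (p.1 - p.2)) ∂(volume.prod volume)
      = (∫ x, u x ^ 2) * (∫ z, m z) + (∫ x, u x ^ 2) * (∫ z, m z) := by
    rw [integral_add hI1 hI2, eval1 hm hu2, eval2 hm hu2]
  have hmval : (∫ z, m z) = (∫ z, k z) - ∫ z, |k z| := by
    simpa [hm_def] using integral_sub hk hk.abs
  simp only [Pi.add_apply] at hmono
  rw [hadd, hmval] at hmono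
  linarith

end NonlocalAux

/-- Coercivity is preserved under a small perturbation of the kernel: if `B_e` (kernel
`γ_e`) is coercive with constant `β` on functions vanishing outside `Ω` and
`‖γ_s‖_{L¹} - ∫ γ_s < β`, then the form `B` with kernel `γ = γ_e + γ_s` satisfies
`B[u,u] ≥ (β + ∫γ_s - ‖γ_s‖_{L¹}) ‖u‖²_{L²(Ω)}`. -/
theorem nonlocalForm_coercive_perturbation
    (n : ℕ) (Ω : Set (EuclideanSpace ℝ (Fin n))) (hΩ : MeasurableSet Ω)
    (γe γs : EuclideanSpace ℝ (Fin n) → ℝ)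
    (hγe : Integrable γe) (hγs : Integrable γs)
    (hγe_even : ∀ z, γe (-z) = γe z) (hγs_even : ∀ z, γs (-z) = γs z)
    (β : ℝ) (hβ : 0 < β)
    (hcoerc : ∀ u : EuclideanSpace ℝ (Fin n) → ℝ,
      MemLp u 2 (volume : Measure (EuclideanSpace ℝ (Fin n))) →
      (∀ᵐ x, x ∉ Ω → u x = 0) →
      β * ∫ x in Ω, (u x) ^ 2 ≤ nonlocalForm n γe u u)
    (hsmall : (∫ z, |γs z|) - (∫ z, γs z) < β) :
    ∀ u : EuclideanSpace ℝ (Fin n) → ℝ,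
      MemLp u 2 (volume : Measure (EuclideanSpace ℝ (Fin n))) →
      (∀ᵐ x, x ∉ Ω → u x = 0) →
      (β + (∫ z, γs z) - ∫ z, |γs z|) * ∫ x in Ω, (u x) ^ 2 ≤
        nonlocalForm n (fun z => γe z + γs z) u u := by
  intro u hu hsupp
  have husm : AEStronglyMeasurable u volume := hu.aestronglyMeasurable
  have hu2 : Integrable (fun x => u x ^ 2) (volume : Measure (EuclideanSpace ℝ (Fin n))) :=
    hu.integrable_sq
  -- the iterated integral equals the product integral
  have key : ∀ k : EuclideanSpace ℝ (Fin n) → ℝ, Integrable k →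
      nonlocalForm n k u u = (1/2) *
        ∫ p : EuclideanSpace ℝ (Fin n) × EuclideanSpace ℝ (Fin n),
          (u p.2 - u p.1) ^ 2 * k (p.1 - p.2) ∂(volume.prod volume) := by
    intro k hk
    have hint := NonlocalAux.int_diff hk husm hu2
    have hint' : Integrable (fun p : EuclideanSpace ℝ (Fin n) × EuclideanSpace ℝ (Fin n) =>
        (u p.2 - u p.1) * k (p.1 - p.2) * (u p.2 - u p.1)) (volume.prod volume) := by
      refine hint.congr ?_
      filter_upwards with p
      ring
    unfold nonlocalForm
    congr 1
    rw [MeasureTheory.integral_integral hint']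
    refine integral_congr_ae ?_
    filter_upwards with p
    ring
  -- support: integral over Ω equals integral over everything
  have hΩint : ∫ x in Ω, (u x) ^ 2 = ∫ x, (u x) ^ 2 := by
    refine setIntegral_eq_integral_of_ae_compl_eq_zero ?_
    filter_upwards [hsupp] with x hx hxΩ
    rw [hx hxΩ]; ring
  -- split the form
  have hsplit : nonlocalForm n (fun z => γe z + γs z) u u
      = nonlocalForm n γe u u + nonlocalForm n γs u u := by
    rw [key (fun z => γe z + γs z) (hγe.add hγs), key _ hγe, key _ hγs]
    have : ∫ p : EuclideanSpace ℝ (Fin n) × EuclideanSpace ℝ (Fin n),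
        (u p.2 - u p.1) ^ 2 * (γe (p.1 - p.2) + γs (p.1 - p.2)) ∂(volume.prod volume)
        = (∫ p : EuclideanSpace ℝ (Fin n) × EuclideanSpace ℝ (Fin n),
            (u p.2 - u p.1) ^ 2 * γe (p.1 - p.2) ∂(volume.prod volume))
          + ∫ p : EuclideanSpace ℝ (Fin n) × EuclideanSpace ℝ (Fin n),
            (u p.2 - u p.1) ^ 2 * γs (p.1 - p.2) ∂(volume.prod volume) := by
      rw [← integral_add (NonlocalAux.int_diff hγe husm hu2)
        (NonlocalAux.int_diff hγs husm hu2)]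
      refine integral_congr_ae ?_
      filter_upwards with p
      ring
    rw [this]
    ring
  have hge : (∫ z, γs z) - (∫ z, |γs z|) ≤ 0 := by
    have := integral_mono hγs hγs.abs (fun z => le_abs_self (γs z))
    linarith
  have hb1 : β * ∫ x in Ω, (u x) ^ 2 ≤ nonlocalForm n γe u u := hcoerc u hu hsupp
  have hb2 : ((∫ z, γs z) - ∫ z, |γs z|) * (∫ x, u x ^ 2) ≤ nonlocalForm n γs u u := by
    rw [key _ hγs]
    have := NonlocalAux.diff_ge hγs husm hu2
    linarith
  rw [hsplit]
  have : ((∫ z, γs z) - ∫ z, |γs z|) * (∫ x, u x ^ 2)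
      = ((∫ z, γs z) - ∫ z, |γs z|) * ∫ x in Ω, (u x) ^ 2 := by rw [hΩint]
  rw [this] at hb2
  nlinarith [hb1, hb2]
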